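/- Let C be a coalgebra over a field k whose coalgebra structure extends to a non-unital Frobenius algebra with non-degenerate multiplication. Then the map C → C*, c ↦ ε(c·−), is an injective morphism of right C*-modules, and symmetrically c ↦ ε(−·c) is an injective morphism of left C*-modules; hence C is left and right co-Frobenius. -/

import Mathlib

open TensorProduct

universe u

variable (k : Type u) [Field k]
variable (C : Type u) [AddCommGroup C] [Module k C]

/-- The convolution product on the dual space of a coalgebra `(C, Δ)`. -/
noncomputable def conv (Δ : C →ₗ[k] C ⊗[k] C) (φ ψ : Module.Dual k C) :
    Module.Dual k C :=
  (LinearMap.mul' k k) ∘ₗ (TensorProduct.map φ ψ) ∘ₗ Δ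

/-- The right action of the dual algebra on `C`: `c ↼ φ = φ(c₁)c₂`. -/
noncomputable def rAct (Δ : C →ₗ[k] C ⊗[k] C) (c : C) (φ : Module.Dual k C) : C :=
  (TensorProduct.lid k C) ((TensorProduct.map φ LinearMap.id) (Δ c))

/-- The left action of the dual algebra on `C`: `φ ⇀ c = c₁φ(c₂)`. -/
noncomputable def lAct (Δ : C →ₗ[k] C ⊗[k] C) (φ : Module.Dual k C) (c : C) : C :=
  (TensorProduct.rid k C) ((TensorProduct.map LinearMap.id φ) (Δ c))

/-- Counit law on the left, paired with an arbitrary functional. -/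
lemma aux_eps_l (Δ : C →ₗ[k] C ⊗[k] C) (ε φ : Module.Dual k C)
    (hcounit_l : ∀ c : C, (TensorProduct.lid k C) ((ε.rTensor C) (Δ c)) = c) (x : C) :
    (LinearMap.mul' k k) ((TensorProduct.map ε φ) (Δ x)) = φ x := by
  have h : ∀ t : C ⊗[k] C,
      (LinearMap.mul' k k) ((TensorProduct.map ε φ) t)
        = φ ((TensorProduct.lid k C) ((ε.rTensor C) t)) := by
    intro t
    induction t using TensorProduct.induction_on with
    | zero => simp
    | tmul a b => simp
    | add x y hx hy => simp [hx, hy]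
  rw [h, hcounit_l]

/-- Counit law on the right, paired with an arbitrary functional. -/
lemma aux_eps_r (Δ : C →ₗ[k] C ⊗[k] C) (ε φ : Module.Dual k C)
    (hcounit_r : ∀ c : C, (TensorProduct.rid k C) ((ε.lTensor C) (Δ c)) = c) (x : C) :
    (LinearMap.mul' k k) ((TensorProduct.map φ ε) (Δ x)) = φ x := by
  have h : ∀ t : C ⊗[k] C,
      (LinearMap.mul' k k) ((TensorProduct.map φ ε) t)
        = φ ((TensorProduct.rid k C) ((ε.lTensor C) t)) := by
    intro t
    induction t using TensorProduct.induction_on with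
    | zero => simp
    | tmul a b => simp [mul_comm]
    | add x y hx hy => simp [hx, hy]
  rw [h, hcounit_r]

/-- Pairing against a composed map on the second factor. -/
lemma aux_map_r (φ ψ : Module.Dual k C) (g : C →ₗ[k] C) (t : C ⊗[k] C) :
    (LinearMap.mul' k k) ((TensorProduct.map φ (ψ ∘ₗ g)) t)
      = (LinearMap.mul' k k)
          ((TensorProduct.map φ ψ) ((TensorProduct.map LinearMap.id g) t)) := by
  induction t using TensorProduct.induction_on with
  | zero => simp
  | tmul a b => simp
  | add x y hx hy => simp [hx, hy]

/-- Pairing against a composed map on the first factor. -/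
lemma aux_map_l (φ ψ : Module.Dual k C) (g : C →ₗ[k] C) (t : C ⊗[k] C) :
    (LinearMap.mul' k k) ((TensorProduct.map (φ ∘ₗ g) ψ) t)
      = (LinearMap.mul' k k)
          ((TensorProduct.map φ ψ) ((TensorProduct.map g LinearMap.id) t)) := by
  induction t using TensorProduct.induction_on with
  | zero => simp
  | tmul a b => simp
  | add x y hx hy => simp [hx, hy]


lemma aux_zero_l (ε : Module.Dual k C) (f : C →ₗ[k] C) (hf : ∀ a : C, ε (f a) = 0)
    (t : C ⊗[k] C) :
    (TensorProduct.lid k C) ((ε.rTensor C) ((TensorProduct.map f LinearMap.id) t)) = 0 := by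
  induction t using TensorProduct.induction_on with
  | zero => simp
  | tmul a b => simp [hf a]
  | add x y hx hy => simp only [map_add, hx, hy, add_zero]

lemma aux_zero_r (ε : Module.Dual k C) (f : C →ₗ[k] C) (hf : ∀ a : C, ε (f a) = 0)
    (t : C ⊗[k] C) :
    (TensorProduct.rid k C) ((ε.lTensor C) ((TensorProduct.map LinearMap.id f) t)) = 0 := by
  induction t using TensorProduct.induction_on with
  | zero => simp
  | tmul a b => simp [hf b]
  | add x y hx hy => simp only [map_add, hx, hy, add_zero]

theorem stmt16 (Δ : C →ₗ[k] C ⊗[k] C) (ε : C →ₗ[k] k)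
    (hcoassoc : ∀ c : C,
      (TensorProduct.assoc k C C C) ((Δ.rTensor C) (Δ c)) = (Δ.lTensor C) (Δ c))
    (hcounit_l : ∀ c : C, (TensorProduct.lid k C) ((ε.rTensor C) (Δ c)) = c)
    (hcounit_r : ∀ c : C, (TensorProduct.rid k C) ((ε.lTensor C) (Δ c)) = c)
    (m : C →ₗ[k] C →ₗ[k] C)
    (hassoc : ∀ a b c : C, m (m a b) c = m a (m b c))
    -- the Frobenius condition: `Δ` is a morphism of bimodules
    (hfrob_l : ∀ c d : C,
      Δ (m c d) = (TensorProduct.map (m c) LinearMap.id) (Δ d))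
    (hfrob_r : ∀ c d : C,
      Δ (m c d) = (TensorProduct.map LinearMap.id (m.flip d)) (Δ c))
    -- non-degeneracy of the multiplication
    (hnd_l : ∀ c : C, (∀ d : C, m c d = 0) → c = 0)
    (hnd_r : ∀ c : C, (∀ d : C, m d c = 0) → c = 0) :
    Function.Injective (fun c : C => ε ∘ₗ m c) ∧
    (∀ (c : C) (φ : Module.Dual k C),
      ε ∘ₗ m (rAct k C Δ c φ) = conv k C Δ (ε ∘ₗ m c) φ) ∧
    Function.Injective (fun c : C => ε ∘ₗ m.flip c) ∧
    (∀ (φ : Module.Dual k C) (c : C),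
      ε ∘ₗ m.flip (lAct k C Δ φ c) = conv k C Δ φ (ε ∘ₗ m.flip c)) := by
  refine ⟨?_, ?_, ?_, ?_⟩
  · -- injectivity of c ↦ ε(c · −)
    intro c c' h
    simp only at h
    have he : ∀ d : C, ε (m (c - c') d) = 0 := by
      intro d
      have := congrArg (fun f => f d) h
      simp only [LinearMap.comp_apply] at this
      simp [this]
    have hz : ∀ d : C, m (c - c') d = 0 := by
      intro d
      calc m (c - c') d = (TensorProduct.lid k C) ((ε.rTensor C) (Δ (m (c - c') d))) :=
            (hcounit_l _).symm
        _ = 0 := by rw [hfrob_l]; exact aux_zero_l k C ε (m (c - c')) he _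
    have := hnd_l _ hz
    exact sub_eq_zero.mp this
  · -- right module morphism property
    intro c φ
    apply LinearMap.ext
    intro d
    have lhs : ε (m (rAct k C Δ c φ) d)
        = (LinearMap.mul' k k)
            ((TensorProduct.map φ (ε ∘ₗ m.flip d)) (Δ c)) := by
      have key : ∀ t : C ⊗[k] C,
          ε (m ((TensorProduct.lid k C) ((TensorProduct.map φ LinearMap.id) t)) d)
            = (LinearMap.mul' k k) ((TensorProduct.map φ (ε ∘ₗ m.flip d)) t) := by
        intro t
        induction t using TensorProduct.induction_on with
        | zero => simp
        | tmul a b => simp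
        | add x y hx hy => simp [hx, hy]
      exact key (Δ c)
    have lhs2 : ε (m (rAct k C Δ c φ) d) = φ (m c d) := by
      rw [lhs, aux_map_r, ← hfrob_r, aux_eps_r k C Δ ε φ hcounit_r]
    have rhs : conv k C Δ (ε ∘ₗ m c) φ d = φ (m c d) := by
      show (LinearMap.mul' k k) ((TensorProduct.map (ε ∘ₗ m c) φ) (Δ d)) = _
      rw [aux_map_l, ← hfrob_l, aux_eps_l k C Δ ε φ hcounit_l]
    simpa [rhs] using lhs2
  · -- injectivity of c ↦ ε(− · c)
    intro c c' h
    simp only at h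
    have he : ∀ d : C, ε (m d (c - c')) = 0 := by
      intro d
      have := congrArg (fun f => f d) h
      simp only [LinearMap.comp_apply, LinearMap.flip_apply] at this
      simp [this]
    have hz : ∀ d : C, m d (c - c') = 0 := by
      intro d
      have he' : ∀ a : C, ε (m.flip (c - c') a) = 0 := fun a => he a
      calc m d (c - c') = (TensorProduct.rid k C) ((ε.lTensor C) (Δ (m d (c - c')))) :=
            (hcounit_r _).symm
        _ = 0 := by rw [hfrob_r]; exact aux_zero_r k C ε (m.flip (c - c')) he' _
    have := hnd_r _ hz
    exact sub_eq_zero.mp this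
  · -- left module morphism property
    intro φ c
    apply LinearMap.ext
    intro d
    have lhs : ε (m d (lAct k C Δ φ c))
        = (LinearMap.mul' k k)
            ((TensorProduct.map (ε ∘ₗ m d) φ) (Δ c)) := by
      have key : ∀ t : C ⊗[k] C,
          ε (m d ((TensorProduct.rid k C) ((TensorProduct.map LinearMap.id φ) t)))
            = (LinearMap.mul' k k) ((TensorProduct.map (ε ∘ₗ m d) φ) t) := by
        intro t
        induction t using TensorProduct.induction_on with
        | zero => simp
        | tmul a b => simp [mul_comm]
        | add x y hx hy => simp [hx, hy]
      exact key (Δ c)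
    have lhs2 : ε (m d (lAct k C Δ φ c)) = φ (m d c) := by
      rw [lhs, aux_map_l, ← hfrob_l, aux_eps_l k C Δ ε φ hcounit_l]
    have rhs : conv k C Δ φ (ε ∘ₗ m.flip c) d = φ (m d c) := by
      show (LinearMap.mul' k k) ((TensorProduct.map φ (ε ∘ₗ m.flip c)) (Δ d)) = _
      rw [aux_map_r, ← hfrob_r, aux_eps_r k C Δ ε φ hcounit_r]
    simpa [rhs] using lhs2
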